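/- Let 𝓕 be a countably infinite set and 𝓘 the set of idempotents of ∏_{F ∈ 𝓕} ℚ with cofinite support. The short exact sequence 0 → ⊕_{F} ℚ → ∏_{F} ℚ → 𝓘⁻¹ ∏_{F} ℚ → 0 of ∏_{F} ℚ-modules does not split. -/

import Mathlib

/-- The idempotent of `∏_{F ∈ ι} ℚ` with support `U`. -/
noncomputable def eU {ι : Type} (U : Set ι) : ι → ℚ :=
  Set.indicator U (fun _ => (1 : ℚ))

/-- The multiplicatively closed set `𝓘` of idempotents of `∏_{F ∈ ι} ℚ`
with cofinite support. -/
noncomputable def Icof (ι : Type) : Submonoid (ι → ℚ) where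
  carrier := {f | ∃ U : Set ι, Uᶜ.Finite ∧ f = eU U}
  one_mem' := ⟨Set.univ, by simp, by funext x; simp [eU]⟩
  mul_mem' := by
    rintro f g ⟨U, hU, rfl⟩ ⟨V, hV, rfl⟩
    refine ⟨U ∩ V, ?_, ?_⟩
    · rw [Set.compl_inter]; exact hU.union hV
    · funext x
      by_cases hx1 : x ∈ U <;> by_cases hx2 : x ∈ V <;>
        simp [eU, Set.indicator_apply, hx1, hx2]

/-- `⊕_{F ∈ ι} ℚ`: the submodule of `∏_{F ∈ ι} ℚ` of finitely supported
functions, as a module over `R₀ = ∏_{F ∈ ι} ℚ`. -/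
def finSupp (ι : Type) : Submodule (ι → ℚ) (ι → ℚ) where
  carrier := {f | (Function.support f).Finite}
  zero_mem' := by simp
  add_mem' := by
    intro f g hf hg
    exact (hf.union hg).subset (Function.support_add f g)
  smul_mem' := by
    intro c f hf
    refine hf.subset ?_
    intro x hx
    simp only [Function.mem_support] at hx ⊢
    intro h
    exact hx (by simp [Pi.smul_apply, smul_eq_mul, h])

/-- The short exact sequence `0 → ⊕ ℚ → ∏ ℚ → 𝓘⁻¹ ∏ ℚ → 0` does not split:
there is no `∏ ℚ`-module retraction `∏ ℚ → ⊕ ℚ` of the inclusion, and no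
`∏ ℚ`-module section `𝓘⁻¹ ∏ ℚ → ∏ ℚ` of the localization map. -/
theorem noRetract (ι : Type) [Infinite ι] :
    ¬ ∃ p : (ι → ℚ) →ₗ[ι → ℚ] finSupp ι, ∀ x : finSupp ι, p (x : ι → ℚ) = x := by
  rintro ⟨p, hp⟩
  classical
  have h1 : ∀ i : ι, ((p 1 : finSupp ι) : ι → ℚ) i = 1 := by
    intro i
    have he : Pi.single i (1 : ℚ) ∈ finSupp ι := by
      apply Set.Finite.subset (Set.finite_singleton i)
      intro x hx
      simp only [Function.mem_support] at hx
      by_contra hxi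
      simp only [Set.mem_singleton_iff] at hxi
      exact hx (Pi.single_eq_of_ne hxi 1)
    have h2 : p (Pi.single i (1 : ℚ)) = ⟨_, he⟩ := hp ⟨_, he⟩
    have h3 : p (Pi.single i (1 : ℚ)) = (Pi.single i (1 : ℚ) : ι → ℚ) • p 1 := by
      rw [← p.map_smul]
      congr 1
      simp [smul_eq_mul]
    have h4 : (Pi.single i (1 : ℚ) : ι → ℚ) = (Pi.single i (1 : ℚ) : ι → ℚ) * ((p 1 : finSupp ι) : ι → ℚ) := by
      have := h3.symm.trans h2
      have := congrArg (Subtype.val) this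
      simpa [smul_eq_mul] using this.symm
    have := congrFun h4 i
    simpa using this.symm
  have hinf : (Function.support ((p 1 : finSupp ι) : ι → ℚ)).Infinite := by
    have : Function.support ((p 1 : finSupp ι) : ι → ℚ) = Set.univ := by
      ext i; simp [Function.mem_support, h1 i]
    rw [this]; exact Set.infinite_univ
  exact hinf (p 1).2

theorem stmt2 (ι : Type) [Countable ι] [Infinite ι] :
    (¬ ∃ p : (ι → ℚ) →ₗ[ι → ℚ] finSupp ι, ∀ x : finSupp ι, p (x : ι → ℚ) = x) ∧
    (¬ ∃ s : Localization (Icof ι) →ₗ[ι → ℚ] (ι → ℚ),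
        ∀ y : Localization (Icof ι),
          algebraMap (ι → ℚ) (Localization (Icof ι)) (s y) = y) := by
  constructor
  · exact noRetract ι
  · rintro ⟨s, hs⟩
    have hker : ∀ f : ι → ℚ,
        algebraMap (ι → ℚ) (Localization (Icof ι)) f = 0 → f ∈ finSupp ι := by
      intro f hf
      rw [IsLocalization.map_eq_zero_iff (Icof ι)] at hf
      obtain ⟨⟨e, U, hU, rfl⟩, he⟩ := hf
      apply hU.subset
      intro x hx
      simp only [Function.mem_support] at hx
      by_contra hxU
      simp only [Set.mem_compl_iff, not_not] at hxU
      have := congrFun he x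
      simp only [Pi.mul_apply, Pi.zero_apply, eU, Set.indicator_of_mem hxU,
        one_mul] at this
      exact hx this
    have hker2 : ∀ f : ι → ℚ, f ∈ finSupp ι →
        algebraMap (ι → ℚ) (Localization (Icof ι)) f = 0 := by
      intro f hf
      rw [IsLocalization.map_eq_zero_iff (Icof ι)]
      refine ⟨⟨eU (Function.support f)ᶜ, (Function.support f)ᶜ, by rw [compl_compl]; exact hf, rfl⟩, ?_⟩
      funext x
      simp only [Pi.mul_apply, Pi.zero_apply]
      by_cases hx : f x = 0
      · simp [hx]
      · have : x ∉ (Function.support f)ᶜ := by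
          simp [Function.mem_support, hx]
        simp [eU, Set.indicator_of_notMem this]
    have hmem : ∀ f : ι → ℚ,
        (((LinearMap.id : (ι → ℚ) →ₗ[ι → ℚ] (ι → ℚ)) - s ∘ₗ Algebra.linearMap (ι → ℚ) (Localization (Icof ι))) f)
          ∈ finSupp ι := by
      intro f
      apply hker
      simp only [LinearMap.sub_apply, LinearMap.id_apply, LinearMap.comp_apply,
        Algebra.linearMap_apply, map_sub, hs]
      ring
    apply noRetract ι
    refine ⟨LinearMap.codRestrict (finSupp ι) _ hmem, ?_⟩
    intro x
    apply Subtype.ext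
    have h0 : algebraMap (ι → ℚ) (Localization (Icof ι)) (x : ι → ℚ) = 0 :=
      hker2 _ x.2
    simp [LinearMap.codRestrict, h0]
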